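/- Let K be a closed convex cone in ℝⁿ and F a face of K. Then CP(F) is an exposed face of CP(K). -/

import Mathlib

open Matrix
open scoped Pointwise

noncomputable section

/-- Frobenius inner product on real `n × n` matrices:
`⟨A,B⟩ = ∑ᵢⱼ Aᵢⱼ Bᵢⱼ`. -/
def mip {n : ℕ} (A B : Matrix (Fin n) (Fin n) ℝ) : ℝ :=
  ∑ i, ∑ j, A i j * B i j

/-- `CPset S` (also used for `S₊(X)` when `S` is a subspace): the set of matrices of the
form `∑ᵢ aᵢaᵢᵀ` for a positive number of vectors `aᵢ ∈ S`. -/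
def CPset {n : ℕ} (S : Set (Fin n → ℝ)) : Set (Matrix (Fin n) (Fin n) ℝ) :=
  {A | ∃ k : ℕ, 0 < k ∧ ∃ f : Fin k → (Fin n → ℝ),
        (∀ i, f i ∈ S) ∧ A = ∑ i, Matrix.vecMulVec (f i) (f i)}

/-- `COPset K`: symmetric matrices `A` with `xᵀAx ≥ 0` for all `x ∈ K`. -/
def COPset {n : ℕ} (K : Set (Fin n → ℝ)) : Set (Matrix (Fin n) (Fin n) ℝ) :=
  {A | A.IsSymm ∧ ∀ x ∈ K, 0 ≤ x ⬝ᵥ A.mulVec x}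

/-- `F` is a face of the convex cone `C`: a nonempty convex subcone such that
`a, b ∈ C`, `a + b ∈ F` imply `a, b ∈ F`. -/
def IsFaceOf {M : Type*} [AddCommMonoid M] [Module ℝ M] (C F : Set M) : Prop :=
  F.Nonempty ∧ F ⊆ C ∧ Convex ℝ F ∧ (∀ x ∈ F, ∀ c : ℝ, 0 ≤ c → c • x ∈ F) ∧
    ∀ a ∈ C, ∀ b ∈ C, a + b ∈ F → a ∈ F ∧ b ∈ F

/-- Exposed face of a cone of matrices (w.r.t. the trace inner product). -/
def IsExposedFaceOf {n : ℕ} (C F : Set (Matrix (Fin n) (Fin n) ℝ)) : Prop :=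
  IsFaceOf C F ∧ ∃ H : Matrix (Fin n) (Fin n) ℝ,
    (∀ A ∈ C, 0 ≤ mip H A) ∧ F = {A ∈ C | mip H A = 0}

/-- Dimension of a set: dimension of its linear span. -/
def setDim {M : Type*} [AddCommGroup M] [Module ℝ M] (S : Set M) : ℕ :=
  Module.finrank ℝ (Submodule.span ℝ S)

/-- The ray `ℝ₊ • x`. -/
def rayOf {M : Type*} [AddCommMonoid M] [Module ℝ M] (x : M) : Set M :=
  {y | ∃ c : ℝ, 0 ≤ c ∧ y = c • x}

/-- An extreme ray: a one-dimensional face. -/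
def IsExtremeRayOf {M : Type*} [AddCommGroup M] [Module ℝ M] (C F : Set M) : Prop :=
  IsFaceOf C F ∧ setDim F = 1

/-- The second-order cone `L^{m+1} = {x : x₀ ≥ ‖(x₁,…,xₘ)‖}`. -/
def soc (m : ℕ) : Set (Fin (m+1) → ℝ) :=
  {x | Real.sqrt (∑ i : Fin m, x i.succ ^ 2) ≤ x 0}

/-- The boundary `∂L^{m+1} = {x : x₀ = ‖(x₁,…,xₘ)‖}`. -/
def socBd (m : ℕ) : Set (Fin (m+1) → ℝ) :=
  {x | Real.sqrt (∑ i : Fin m, x i.succ ^ 2) = x 0}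

/-- The interior `int L^{m+1} = {x : x₀ > ‖(x₁,…,xₘ)‖}`. -/
def socInt (m : ℕ) : Set (Fin (m+1) → ℝ) :=
  {x | Real.sqrt (∑ i : Fin m, x i.succ ^ 2) < x 0}

/-- The matrix `J = diag(1, −1, …, −1)`. -/
def Jmat (m : ℕ) : Matrix (Fin (m+1)) (Fin (m+1)) ℝ :=
  Matrix.diagonal fun i => if i = 0 then 1 else -1

/-- The hyperplane `{x : x ⬝ u = 0}` as a submodule. -/
def perpHyp {n : ℕ} (u : Fin n → ℝ) : Submodule ℝ (Fin n → ℝ) where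
  carrier := {x | x ⬝ᵥ u = 0}
  add_mem' := by
    intro a b ha hb
    simp only [Set.mem_setOf_eq, add_dotProduct] at *
    linarith
  zero_mem' := by simp [zero_dotProduct]
  smul_mem' := by
    intro c a ha
    simp only [Set.mem_setOf_eq, smul_dotProduct] at *
    simp [ha]

/-- A polyhedral cone: nonnegative combinations of finitely many vectors. -/
def IsPolyhedralCone {M : Type*} [AddCommMonoid M] [Module ℝ M] (S : Set M) : Prop :=
  ∃ (k : ℕ) (g : Fin k → M),
    S = {x | ∃ c : Fin k → ℝ, (∀ i, 0 ≤ c i) ∧ x = ∑ i, c i • g i}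

end

section stmt3aux

open Matrix

lemma mip_add' {n : ℕ} (H A B : Matrix (Fin n) (Fin n) ℝ) :
    mip H (A + B) = mip H A + mip H B := by
  simp [mip, mul_add, Finset.sum_add_distrib]

lemma mip_finsum {n : ℕ} {ι : Type*} (s : Finset ι) (H : Matrix (Fin n) (Fin n) ℝ)
    (M : ι → Matrix (Fin n) (Fin n) ℝ) :
    mip H (∑ i ∈ s, M i) = ∑ i ∈ s, mip H (M i) := by
  classical
  induction s using Finset.cons_induction with
  | empty => simp [mip]
  | cons a s ha ih => rw [Finset.sum_cons, Finset.sum_cons, mip_add', ih]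

lemma mip_add_left' {n : ℕ} (H H' A : Matrix (Fin n) (Fin n) ℝ) :
    mip (H + H') A = mip H A + mip H' A := by
  simp [mip, add_mul, Finset.sum_add_distrib]

lemma mip_finsum_left {n : ℕ} {ι : Type*} (s : Finset ι) (A : Matrix (Fin n) (Fin n) ℝ)
    (M : ι → Matrix (Fin n) (Fin n) ℝ) :
    mip (∑ i ∈ s, M i) A = ∑ i ∈ s, mip (M i) A := by
  classical
  induction s using Finset.cons_induction with
  | empty => simp [mip]
  | cons a s ha ih => rw [Finset.sum_cons, Finset.sum_cons, mip_add_left', ih]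

lemma mip_vecMulVec' {n : ℕ} (u a : Fin n → ℝ) :
    mip (vecMulVec u u) (vecMulVec a a) = (u ⬝ᵥ a) ^ 2 := by
  simp only [mip, vecMulVec_apply, dotProduct, sq, Finset.sum_mul_sum]
  refine Finset.sum_congr rfl fun i _ => Finset.sum_congr rfl fun j _ => by ring

lemma CPset_add' {n : ℕ} {S : Set (Fin n → ℝ)} {A B : Matrix (Fin n) (Fin n) ℝ}
    (hA : A ∈ CPset S) (hB : B ∈ CPset S) : A + B ∈ CPset S := by
  obtain ⟨k, hk, f, hf, rfl⟩ := hA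
  obtain ⟨l, hl, g, hg, rfl⟩ := hB
  refine ⟨k + l, by omega, Fin.append f g, ?_, ?_⟩
  · intro i
    refine Fin.addCases (fun j => ?_) (fun j => ?_) i
    · rw [Fin.append_left]; exact hf j
    · rw [Fin.append_right]; exact hg j
  · rw [Fin.sum_univ_add]
    congr 1 <;> refine Finset.sum_congr rfl fun i _ => ?_ <;>
      simp [Fin.append_left, Fin.append_right]

lemma CPset_smul' {n : ℕ} {S : Set (Fin n → ℝ)}
    (hS : ∀ x ∈ S, ∀ c : ℝ, 0 ≤ c → c • x ∈ S)
    {A : Matrix (Fin n) (Fin n) ℝ} {c : ℝ} (hc : 0 ≤ c) (hA : A ∈ CPset S) :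
    c • A ∈ CPset S := by
  obtain ⟨k, hk, f, hf, rfl⟩ := hA
  refine ⟨k, hk, fun i => Real.sqrt c • f i,
    fun i => hS _ (hf i) _ (Real.sqrt_nonneg c), ?_⟩
  rw [Finset.smul_sum]
  refine Finset.sum_congr rfl fun i _ => ?_
  ext a b
  simp only [Matrix.smul_apply, vecMulVec_apply, Pi.smul_apply, smul_eq_mul]
  calc c * (f i a * f i b) = (Real.sqrt c * Real.sqrt c) * (f i a * f i b) := by
        rw [Real.mul_self_sqrt hc]
    _ = Real.sqrt c * f i a * (Real.sqrt c * f i b) := by ring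

end stmt3aux

/-- if `F` is a face of a closed convex cone `K ⊆ ℝⁿ`,
then `CP(F)` is an exposed face of `CP(K)`. -/
theorem stmt3 (n : ℕ) (K : Set (Fin n → ℝ)) (hKcl : IsClosed K)
    (hKconv : Convex ℝ K)
    (hKcone : ∀ x ∈ K, ∀ c : ℝ, 0 ≤ c → c • x ∈ K)
    (F : Set (Fin n → ℝ)) (hF : IsFaceOf K F) :
    IsExposedFaceOf (CPset K) (CPset F) := by
  obtain ⟨hFne, hFK, hFconv, hFcone, hFface⟩ := hF
  have h0F : (0 : Fin n → ℝ) ∈ F := by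
    obtain ⟨a, ha⟩ := hFne
    simpa using hFcone a ha 0 le_rfl
  have haddF : ∀ u ∈ F, ∀ v ∈ F, u + v ∈ F := by
    intro u hu v hv
    have hmid : (1/2 : ℝ) • u + (1/2 : ℝ) • v ∈ F :=
      hFconv hu hv (by norm_num) (by norm_num) (by norm_num)
    have h2 := hFcone _ hmid 2 (by norm_num)
    have heq : u + v = (2 : ℝ) • ((1/2 : ℝ) • u + (1/2 : ℝ) • v) := by module
    rw [heq]; exact h2
  set W : Submodule ℝ (Fin n → ℝ) := Submodule.span ℝ F with hWdef
  set WE : Submodule ℝ (EuclideanSpace ℝ (Fin n)) :=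
    W.comap (WithLp.linearEquiv 2 ℝ (Fin n → ℝ)).toLinearMap with hWEdef
  have hspan : ∀ x : Fin n → ℝ, x ∈ W → ∃ u ∈ F, ∃ v ∈ F, x = u - v := by
    intro x hx
    induction hx using Submodule.span_induction with
    | mem x hxF => exact ⟨x, hxF, 0, h0F, by simp⟩
    | zero => exact ⟨0, h0F, 0, h0F, by simp⟩
    | add x y hx hy ihx ihy =>
      obtain ⟨u1, hu1, v1, hv1, rfl⟩ := ihx
      obtain ⟨u2, hu2, v2, hv2, rfl⟩ := ihy
      exact ⟨u1 + u2, haddF _ hu1 _ hu2, v1 + v2, haddF _ hv1 _ hv2, by abel⟩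
    | smul c x hx ih =>
      obtain ⟨u, hu, v, hv, rfl⟩ := ih
      rcases le_total 0 c with h | h
      · exact ⟨c • u, hFcone _ hu _ h, c • v, hFcone _ hv _ h, by rw [smul_sub]⟩
      · refine ⟨(-c) • v, hFcone _ hv _ (by linarith), (-c) • u, hFcone _ hu _ (by linarith), ?_⟩
        rw [smul_sub, neg_smul, neg_smul]; abel
  have hcap : ∀ x ∈ K, x ∈ W → x ∈ F := by
    intro x hxK hxW
    obtain ⟨u, hu, v, hv, hxuv⟩ := hspan x hxW
    have hxv : x + v = u := by rw [hxuv]; abel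
    exact (hFface x hxK v (hFK hv) (hxv ▸ hu)).1
  set b := stdOrthonormalBasis ℝ ↥WEᗮ with hbdef
  set H : Matrix (Fin n) (Fin n) ℝ :=
    ∑ t, vecMulVec ((b t : EuclideanSpace ℝ (Fin n)) : Fin n → ℝ)
      ((b t : EuclideanSpace ℝ (Fin n)) : Fin n → ℝ) with hHdef
  have hinner : ∀ x y : EuclideanSpace ℝ (Fin n), (inner ℝ x y : ℝ) = x ⬝ᵥ y := by
    intro x y
    simp [PiLp.inner_apply, RCLike.inner_apply, dotProduct, mul_comm]
  have hq : ∀ a : Fin n → ℝ, mip H (vecMulVec a a) =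
      ∑ t, (((b t : EuclideanSpace ℝ (Fin n)) : Fin n → ℝ) ⬝ᵥ a) ^ 2 := by
    intro a
    rw [hHdef, mip_finsum_left]
    exact Finset.sum_congr rfl fun t _ => mip_vecMulVec' _ _
  have hq0 : ∀ a : Fin n → ℝ, 0 ≤ mip H (vecMulVec a a) := by
    intro a; rw [hq]; positivity
  have hqmem : ∀ a : Fin n → ℝ, mip H (vecMulVec a a) = 0 ↔ a ∈ W := by
    intro a
    rw [hq]
    constructor
    · intro h
      have hz : ∀ t, ((b t : EuclideanSpace ℝ (Fin n)) : Fin n → ℝ) ⬝ᵥ a = 0 := by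
        intro t
        have h1 := (Finset.sum_eq_zero_iff_of_nonneg
          (fun t _ => sq_nonneg _)).1 h t (Finset.mem_univ t)
        exact pow_eq_zero_iff (two_ne_zero) |>.1 h1
      have hmem : ∀ u : EuclideanSpace ℝ (Fin n), u ∈ WEᗮ → (inner ℝ u (WithLp.toLp 2 a) : ℝ) = 0 := by
        intro u hu
        have hu2 : (↑(∑ t, b.repr ⟨u, hu⟩ t • b t) : EuclideanSpace ℝ (Fin n)) = u := by
          rw [b.sum_repr]
        rw [← hu2]
        push_cast
        rw [sum_inner]
        refine Finset.sum_eq_zero fun t _ => ?_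
        rw [real_inner_smul_left, hinner, WithLp.ofLp_toLp, hz t, mul_zero]
      have hWE := (Submodule.mem_orthogonal WEᗮ (WithLp.toLp 2 a)).2 hmem
      rw [Submodule.orthogonal_orthogonal] at hWE
      exact hWE
    · intro h
      refine Finset.sum_eq_zero fun t _ => ?_
      have horth := (Submodule.mem_orthogonal _ _).1 (b t).2 (WithLp.toLp 2 a) h
      rw [hinner, WithLp.ofLp_toLp] at horth
      rw [dotProduct_comm, horth]
      simp
  have hHnonneg : ∀ A ∈ CPset K, 0 ≤ mip H A := by
    rintro A ⟨k, hk, f, hf, rfl⟩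
    rw [mip_finsum]
    exact Finset.sum_nonneg fun i _ => hq0 _
  have hset : CPset F = {A ∈ CPset K | mip H A = 0} := by
    ext A
    constructor
    · rintro ⟨k, hk, f, hf, rfl⟩
      refine ⟨⟨k, hk, f, fun i => hFK (hf i), rfl⟩, ?_⟩
      rw [mip_finsum]
      exact Finset.sum_eq_zero fun i _ => (hqmem _).2 (Submodule.subset_span (hf i))
    · rintro ⟨⟨k, hk, f, hf, rfl⟩, hm⟩
      refine ⟨k, hk, f, fun i => ?_, rfl⟩
      rw [mip_finsum] at hm
      have h1 := (Finset.sum_eq_zero_iff_of_nonneg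
        (fun i _ => hq0 _)).1 hm i (Finset.mem_univ i)
      exact hcap _ (hf i) ((hqmem _).1 h1)
  refine ⟨⟨?_, ?_, ?_, ?_, ?_⟩, H, hHnonneg, hset⟩
  · exact ⟨∑ i : Fin 1, vecMulVec (0 : Fin n → ℝ) 0, 1, one_pos, fun _ => 0,
      fun _ => h0F, rfl⟩
  · rintro A ⟨k, hk, f, hf, rfl⟩
    exact ⟨k, hk, f, fun i => hFK (hf i), rfl⟩
  · intro A hA B hB c d hc hd hcd
    exact CPset_add' (CPset_smul' hFcone hc hA) (CPset_smul' hFcone hd hB)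
  · intro A hA c hc
    exact CPset_smul' hFcone hc hA
  · intro A hA B hB hABF
    have hAB0 : mip H (A + B) = 0 := by
      have := hset ▸ hABF
      exact this.2
    rw [mip_add'] at hAB0
    have h1 := hHnonneg A hA
    have h2 := hHnonneg B hB
    constructor <;> rw [hset]
    · exact ⟨hA, by linarith⟩
    · exact ⟨hB, by linarith⟩
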